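/- Let k ≥ 1, let G be a k-colorable chordal graph, let T be a clique of G with |T| ≥ k−1, and let v ∈ T. If C^c_k(G,T) is a (k−1,k)-color-complete graph, then C^c_k(G, T∖{v}) is a (k−2,k)-color-complete graph. If C^c_k(G,T) is a forest that satisfies the injective neighborhood property, then C^c_k(G, T∖{v}) is a forest that satisfies the injective neighborhood property. -/

import Mathlib

open SimpleGraph

/-- A proper `k`-coloring of a graph. -/
def IsColoring {W : Type*} (G : SimpleGraph W) (k : ℕ) (α : W → Fin k) : Prop :=
  ∀ u v : W, G.Adj u v → α u ≠ α v

/-- The `k`-color graph `C_k(G)`: nodes are proper `k`-colorings of `G`,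
two colorings being adjacent iff they differ on exactly one vertex. -/
def colorGraph {W : Type*} (G : SimpleGraph W) (k : ℕ) :
    SimpleGraph {α : W → Fin k // IsColoring G k α} where
  Adj α β := ∃! w, α.1 w ≠ β.1 w
  symm := ⟨by
    rintro α β ⟨w, hw, hu⟩
    exact ⟨w, hw.symm, fun u hu' => hu u hu'.symm⟩⟩
  loopless := ⟨by
    rintro α ⟨w, hw, -⟩
    exact hw rfl⟩

/-- The subgraph of a labeled graph consisting of the edges between
equally labeled nodes. -/
def sameLabelSub {N L : Type*} (H : SimpleGraph N) (f : N → L) : SimpleGraph N where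
  Adj x y := H.Adj x y ∧ f x = f y
  symm := ⟨fun _ _ h => ⟨h.1.symm, h.2.symm⟩⟩
  loopless := ⟨fun x h => H.ne_of_adj h.1 rfl⟩

/-- The quotient graph obtained from a labeled graph by contracting every
(maximal) connected set of equally labeled nodes (i.e. every label component)
into a single node. -/
def quotGraph {N L : Type*} (H : SimpleGraph N) (f : N → L) :
    SimpleGraph (sameLabelSub H f).ConnectedComponent where
  Adj c d := c ≠ d ∧ ∃ a b, (sameLabelSub H f).connectedComponentMk a = c ∧
      (sameLabelSub H f).connectedComponentMk b = d ∧ H.Adj a b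
  symm := ⟨by
    rintro c d ⟨hne, a, b, ha, hb, hab⟩
    exact ⟨hne.symm, b, a, hb, ha, hab.symm⟩⟩
  loopless := ⟨fun c h => h.1 rfl⟩

/-- The common label of a label component. -/
def quotLabel {N L : Type*} (H : SimpleGraph N) (f : N → L) :
    (sameLabelSub H f).ConnectedComponent → L :=
  SimpleGraph.ConnectedComponent.lift f (by
    intro v w p hp
    clear hp
    induction p with
    | nil => rfl
    | cons h _ ih => exact (show H.Adj _ _ ∧ f _ = f _ from h).2.trans ih)

/-- The label of a coloring: its restriction to the terminal set `T`. -/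
def csgLabelFun {W : Type*} (G : SimpleGraph W) (k : ℕ) (T : Set W) :
    {α : W → Fin k // IsColoring G k α} → (T → Fin k) :=
  fun α t => α.1 t.1

/-- The node set of the contracted solution graph: the label components. -/
abbrev CSGNode {W : Type*} (G : SimpleGraph W) (k : ℕ) (T : Set W) :=
  (sameLabelSub (colorGraph G k) (csgLabelFun G k T)).ConnectedComponent

/-- The contracted solution graph `C^c_k(G,T)`. -/
def CSG {W : Type*} (G : SimpleGraph W) (k : ℕ) (T : Set W) : SimpleGraph (CSGNode G k T) :=
  quotGraph (colorGraph G k) (csgLabelFun G k T)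

/-- The `γ`-node of the contracted solution graph: the label component containing `γ`. -/
def csgNode {W : Type*} (G : SimpleGraph W) (k : ℕ) (T : Set W)
    (γ : {α : W → Fin k // IsColoring G k α}) : CSGNode G k T :=
  (sameLabelSub (colorGraph G k) (csgLabelFun G k T)).connectedComponentMk γ

/-- The label of a node of the contracted solution graph: the common restriction
to `T` of its colorings. -/
def csgLabel {W : Type*} (G : SimpleGraph W) (k : ℕ) (T : Set W) :
    CSGNode G k T → (T → Fin k) :=
  quotLabel (colorGraph G k) (csgLabelFun G k T)

/-- The restriction of a proper coloring to an induced subgraph. -/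
def restrictColoring {W : Type*} (G : SimpleGraph W) (k : ℕ) (S : Set W)
    (γ : {α : W → Fin k // IsColoring G k α}) :
    {α : S → Fin k // IsColoring (G.induce S) k α} :=
  ⟨fun u => γ.1 u.1, fun u w h => γ.2 u.1 w.1 h⟩

/-- A graph is chordal if it contains no induced cycle of length greater than 3. -/
def Chordal {W : Type*} (G : SimpleGraph W) : Prop :=
  ∀ n : ℕ, 4 ≤ n → IsEmpty (SimpleGraph.cycleGraph n ↪g G)

/-- `S` is a vertex cut: `G - S` is disconnected. -/
def IsVertexCut {W : Type*} (G : SimpleGraph W) (S : Set W) : Prop :=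
  ¬ (G.induce Sᶜ).Preconnected

/-- `G` is `l`-connected. -/
def LConnected {W : Type*} (G : SimpleGraph W) (l : ℕ) : Prop :=
  G.Connected ∧ l + 1 ≤ Nat.card W ∧ ∀ S : Set W, IsVertexCut G S → l ≤ S.ncard

/-- A labeled graph `(H,ℓ)`, whose labels are `k`-colorings of the complete graph
on a vertex (type) `S`, is an `(|S|,k)`-color-complete graph. -/
def IsColorComplete {N S : Type*} (k : ℕ) (H : SimpleGraph N) (ℓ : N → S → Fin k) : Prop :=
  (∀ x, Function.Injective (ℓ x)) ∧
  (∀ f : S → Fin k, Function.Injective f → ∃! x, ℓ x = f) ∧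
  (∀ x y, H.Adj x y ↔ ∃! s, ℓ x s ≠ ℓ y s)

/-- The injective neighborhood property. -/
def INP {N L : Type*} (H : SimpleGraph N) (ℓ : N → L) : Prop :=
  ∀ u v w : N, H.Adj u v → H.Adj u w → v ≠ w → ℓ v ≠ ℓ w

/-- The weight `w(P)` of a walk `P` in a labeled graph: the sum over the vertices `x`
of `P` of the number of colors used by labels of neighbors of `x` in `P` but not by
the label of `x`. -/
noncomputable def walkWeight {N S : Type*} {k : ℕ} {G : SimpleGraph N} (ℓ : N → S → Fin k)
    {a b : N} (P : G.Walk a b) : ℕ :=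
  letI := Classical.decEq N
  ∑ x ∈ P.support.toFinset,
    ((⋃ y ∈ P.toSubgraph.neighborSet x, Set.range (ℓ y)) \ Set.range (ℓ x)).ncard

namespace Statement11
set_option linter.unusedSectionVars false
set_option linter.unusedVariables false

variable {V : Type} [Fintype V] [DecidableEq V] (G : SimpleGraph V) (k : ℕ)

/-! ### Basic lemmas about the contracted solution graph -/

lemma label_mk (S : Set V) (γ : {α : V → Fin k // IsColoring G k α}) :
    csgLabel G k S (csgNode G k S γ) = csgLabelFun G k S γ := rfl

lemma csg_adj_iff {S : Set V} {n₁ n₂ : CSGNode G k S} :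
    (CSG G k S).Adj n₁ n₂ ↔ n₁ ≠ n₂ ∧ ∃ a b, csgNode G k S a = n₁ ∧ csgNode G k S b = n₂ ∧
      (colorGraph G k).Adj a b :=
  Iff.rfl

lemma sls_adj_iff {S : Set V} {a b : {α : V → Fin k // IsColoring G k α}} :
    (sameLabelSub (colorGraph G k) (csgLabelFun G k S)).Adj a b ↔
      (colorGraph G k).Adj a b ∧ csgLabelFun G k S a = csgLabelFun G k S b :=
  Iff.rfl

lemma coloring_inj_clique {S : Set V} (hS : G.IsClique S)
    (γ : {α : V → Fin k // IsColoring G k α}) :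
    Function.Injective (csgLabelFun G k S γ) := by
  intro s s' h
  by_contra hne
  have hadj : G.Adj s.1 s'.1 := hS s.2 s'.2 (fun h' => hne (Subtype.ext h'))
  exact γ.2 s.1 s'.1 hadj h

lemma csgLabel_inj {S : Set V} (hS : G.IsClique S) (n : CSGNode G k S) :
    Function.Injective (csgLabel G k S n) := by
  induction n using SimpleGraph.ConnectedComponent.ind with
  | _ γ => exact coloring_inj_clique G k hS γ

lemma csg_adj_exists_unique {S : Set V} {n₁ n₂ : CSGNode G k S}
    (h : (CSG G k S).Adj n₁ n₂) :
    ∃! s : S, csgLabel G k S n₁ s ≠ csgLabel G k S n₂ s := by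
  obtain ⟨hne, γ, δ, hγ, hδ, hadj⟩ := (csg_adj_iff G k).mp h
  obtain ⟨z, hz, huz⟩ := hadj
  subst hγ; subst hδ
  have hlab : csgLabelFun G k S γ ≠ csgLabelFun G k S δ := by
    intro he
    exact hne (SimpleGraph.ConnectedComponent.sound
      (SimpleGraph.Adj.reachable ((sls_adj_iff G k).mpr ⟨⟨z, hz, huz⟩, he⟩)))
  obtain ⟨s, hs⟩ := Function.ne_iff.mp hlab
  refine ⟨s, hs, ?_⟩
  intro s' hs'
  have h1 : (s' : V) = z := huz s'.1 hs'
  have h2 : (s : V) = z := huz s.1 hs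
  exact Subtype.ext (h1.trans h2.symm)

lemma adj_label_ne {S : Set V} {n₁ n₂ : CSGNode G k S} (h : (CSG G k S).Adj n₁ n₂) :
    csgLabel G k S n₁ ≠ csgLabel G k S n₂ := by
  obtain ⟨s, hs, -⟩ := csg_adj_exists_unique G k h
  exact fun he => hs (congrFun he s)

lemma csgNode_mono {S S' : Set V} (hss : S ⊆ S') {γ δ : {α : V → Fin k // IsColoring G k α}}
    (h : csgNode G k S' γ = csgNode G k S' δ) : csgNode G k S γ = csgNode G k S δ := by
  have hr := SimpleGraph.ConnectedComponent.exact h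
  refine SimpleGraph.ConnectedComponent.sound (SimpleGraph.Reachable.mono ?_ hr)
  intro a b hab
  exact ⟨hab.1, funext fun s => congrFun hab.2 ⟨s.1, hss s.2⟩⟩

lemma card_coe (S : Set V) [Fintype ↥S] : Fintype.card ↥S = S.ncard := by
  rw [← Nat.card_eq_fintype_card, Nat.card_coe_set_eq]

lemma exists_color_notin (A : Finset (Fin k)) (hA : A.card < k) : ∃ c, c ∉ A := by
  by_contra h
  push_neg at h
  have hsub : Finset.univ ⊆ A := fun x _ => h x
  have := Finset.card_le_card hsub
  rw [Finset.card_univ, Fintype.card_fin] at this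
  omega

/-! ### The distinguished vertex `v` of `T` -/

variable {T : Set V} {v : V}

lemma mem_S_val_ne (s : ↥(T \ {v})) : (s : V) ≠ v := s.2.2

lemma T_cases (hv : v ∈ T) (t : ↥T) :
    t = ⟨v, hv⟩ ∨ ∃ s : ↥(T \ {v}), t = ⟨s.1, s.2.1⟩ := by
  by_cases h : t.1 = v
  · left; exact Subtype.ext h
  · right; exact ⟨⟨t.1, ⟨t.2, h⟩⟩, rfl⟩

lemma ext_label_eq (hv : v ∈ T) {L L' : ↥T → Fin k}
    (hS : ∀ s : ↥(T \ {v}), L ⟨s.1, s.2.1⟩ = L' ⟨s.1, s.2.1⟩)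
    (hvv : L ⟨v, hv⟩ = L' ⟨v, hv⟩) : L = L' := by
  funext t
  rcases T_cases hv t with h | ⟨s, h⟩
  · rw [h]; exact hvv
  · rw [h]; exact hS s

/-- Extension of a coloring of `T \ {v}` to `T` by a color `c` at `v`. -/
def extFun (T : Set V) (v : V) (f : ↥(T \ {v}) → Fin k) (c : Fin k) : ↥T → Fin k :=
  fun t => if h : t.1 = v then c else f ⟨t.1, ⟨t.2, h⟩⟩

lemma extFun_incl (f : ↥(T \ {v}) → Fin k) (c : Fin k) (s : ↥(T \ {v})) :
    extFun k T v f c ⟨s.1, s.2.1⟩ = f s := by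
  have h : ¬ (s : V) = v := s.2.2
  simp only [extFun, dif_neg h]

lemma extFun_v (hv : v ∈ T) (f : ↥(T \ {v}) → Fin k) (c : Fin k) :
    extFun k T v f c ⟨v, hv⟩ = c := by
  simp only [extFun, dif_pos]

lemma extFun_inj {f : ↥(T \ {v}) → Fin k} (hf : Function.Injective f) {c : Fin k}
    (hc : ∀ s, c ≠ f s) : Function.Injective (extFun k T v f c) := by
  intro t t' h
  unfold extFun at h
  split_ifs at h with h1 h2 h2
  · exact Subtype.ext (h1.trans h2.symm)
  · exact absurd h (hc _)
  · exact absurd h.symm (hc _)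
  · have h3 := hf h
    exact Subtype.ext (congrArg (fun x : ↥(T \ {v}) => (x : V)) h3)

lemma labelFun_eq_ext (hv : v ∈ T) (γ : {α : V → Fin k // IsColoring G k α}) :
    csgLabelFun G k T γ = extFun k T v (csgLabelFun G k (T \ {v}) γ) (γ.1 v) := by
  funext t
  by_cases h : t.1 = v
  · show γ.1 t.1 = extFun k T v _ _ t
    rw [extFun, dif_pos h, h]
  · show γ.1 t.1 = extFun k T v _ _ t
    rw [extFun, dif_neg h]
    rfl

lemma step_lemma {γ δ : {α : V → Fin k // IsColoring G k α}}
    (hadj : (colorGraph G k).Adj γ δ)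
    (hne : csgNode G k (T \ {v}) γ ≠ csgNode G k (T \ {v}) δ) :
    ∃ s : ↥(T \ {v}), γ.1 s.1 ≠ δ.1 s.1 ∧ ∀ w : V, w ≠ s.1 → γ.1 w = δ.1 w := by
  obtain ⟨z, hz, huz⟩ := hadj
  have hex : ∃ s : ↥(T \ {v}), γ.1 s.1 ≠ δ.1 s.1 := by
    by_contra hc
    push_neg at hc
    exact hne (SimpleGraph.ConnectedComponent.sound (SimpleGraph.Adj.reachable
      ((sls_adj_iff G k).mpr ⟨⟨z, hz, huz⟩, funext fun s => hc s⟩)))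
  obtain ⟨s, hs⟩ := hex
  have hzs : z = s.1 := (huz s.1 hs).symm
  exact ⟨s, hs, fun w hw => by_contra fun hcw => hw ((huz w hcw).trans hzs)⟩

/-! ### Part 1: color-completeness is preserved -/

lemma part1 (hT : G.IsClique T) (hv : v ∈ T)
    (hTc : T.ncard = k - 1) (hcc : IsColorComplete k (CSG G k T) (csgLabel G k T)) :
    (T \ {v}).ncard = k - 2 ∧
      IsColorComplete k (CSG G k (T \ {v})) (csgLabel G k (T \ {v})) := by
  haveI : Fintype ↥T := Fintype.ofFinite _
  haveI : Fintype ↥(T \ {v}) := Fintype.ofFinite _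
  have hk2 : 2 ≤ k := by
    have h1 : 0 < T.ncard := (Set.ncard_pos (Set.toFinite T)).mpr ⟨v, hv⟩
    omega
  have hScard : (T \ {v}).ncard = k - 2 := by
    rw [Set.ncard_diff_singleton_of_mem hv, hTc]
    omega
  have cardS : Fintype.card ↥(T \ {v}) = k - 2 := by rw [card_coe]; exact hScard
  have hSclique : G.IsClique (T \ {v}) := hT.subset Set.diff_subset
  have hinj : ∀ X, Function.Injective (csgLabel G k (T \ {v}) X) :=
    csgLabel_inj G k hSclique
  -- key: existence and uniqueness of nodes with a given injective label
  have key : ∀ f : ↥(T \ {v}) → Fin k, Function.Injective f →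
      ∃! X : CSGNode G k (T \ {v}), csgLabel G k (T \ {v}) X = f := by
    intro f hf
    have hcardim : (Finset.image f Finset.univ).card < k := by
      rw [Finset.card_image_of_injective _ hf, Finset.card_univ, cardS]
      omega
    obtain ⟨c, hc⟩ := exists_color_notin k _ hcardim
    have hcf : ∀ s, c ≠ f s := fun s h =>
      hc (Finset.mem_image.mpr ⟨s, Finset.mem_univ _, h.symm⟩)
    have hFinj := extFun_inj k hf hcf
    obtain ⟨x, hx, hxu⟩ := hcc.2.1 (extFun k T v f c) hFinj
    obtain ⟨γ, hγ⟩ := x.exists_rep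
    have hγ' : csgNode G k T γ = x := hγ
    have hγlab : csgLabelFun G k T γ = extFun k T v f c := by
      rw [← hγ'] at hx; exact hx
    refine ⟨csgNode G k (T \ {v}) γ, ?_, ?_⟩
    · funext s
      show γ.1 s.1 = f s
      have h1 : csgLabelFun G k T γ ⟨s.1, s.2.1⟩ = extFun k T v f c ⟨s.1, s.2.1⟩ :=
        congrFun hγlab _
      rw [extFun_incl] at h1
      exact h1
    · intro X' hX'
      obtain ⟨δ, hδ⟩ := X'.exists_rep
      have hδ' : csgNode G k (T \ {v}) δ = X' := hδ
      have hδS : csgLabelFun G k (T \ {v}) δ = f := by rw [← hδ'] at hX'; exact hX'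
      have hδT : csgLabelFun G k T δ = extFun k T v f (δ.1 v) := by
        rw [labelFun_eq_ext G k hv δ, hδS]
      have hδvinj : ∀ s, δ.1 v ≠ f s := by
        intro s h
        have h1 : csgLabelFun G k T δ ⟨v, hv⟩ = csgLabelFun G k T δ ⟨s.1, s.2.1⟩ := by
          show δ.1 v = δ.1 s.1
          rw [h, ← hδS]
          rfl
        have h2 := coloring_inj_clique G k hT δ h1
        exact s.2.2 (congrArg Subtype.val h2).symm
      by_cases hcase : δ.1 v = c
      · have hlab2 : csgLabelFun G k T δ = extFun k T v f c := by rw [hδT, hcase]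
        have hn1 : csgNode G k T δ = x := hxu _ hlab2
        have hn2 : csgNode G k T δ = csgNode G k T γ := by rw [hn1, hγ']
        rw [← hδ']
        exact csgNode_mono G k Set.diff_subset hn2
      · have hδTinj : Function.Injective (extFun k T v f (δ.1 v)) :=
          extFun_inj k hf hδvinj
        obtain ⟨x₂, hx₂, hx₂u⟩ := hcc.2.1 (extFun k T v f (δ.1 v)) hδTinj
        have hδnode : csgNode G k T δ = x₂ := hx₂u _ hδT
        have hdiff : ∃! t : ↥T, csgLabel G k T x t ≠ csgLabel G k T x₂ t := by
          rw [hx, hx₂]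
          refine ⟨⟨v, hv⟩, ?_, ?_⟩
          · show extFun k T v f c ⟨v, hv⟩ ≠ extFun k T v f (δ.1 v) ⟨v, hv⟩
            rw [extFun_v k hv, extFun_v k hv]
            exact fun h => hcase h.symm
          · intro t ht
            rcases T_cases hv t with h | ⟨s, h⟩
            · exact h
            · exfalso
              apply ht
              rw [h, extFun_incl, extFun_incl]
        have hadjxy : (CSG G k T).Adj x x₂ := (hcc.2.2 x x₂).mpr hdiff
        obtain ⟨hnexy, γ₂, δ₂, hγ₂, hδ₂, hadj₂⟩ := (csg_adj_iff G k).mp hadjxy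
        have e1 : csgLabelFun G k T γ₂ = extFun k T v f c := by
          rw [← label_mk, hγ₂, hx]
        have e2 : csgLabelFun G k T δ₂ = extFun k T v f (δ.1 v) := by
          rw [← label_mk, hδ₂, hx₂]
        have hlabγ₂δ₂ : csgLabelFun G k (T \ {v}) γ₂ = csgLabelFun G k (T \ {v}) δ₂ := by
          funext s
          show γ₂.1 s.1 = δ₂.1 s.1
          have h1 : csgLabelFun G k T γ₂ ⟨s.1, s.2.1⟩ = f s := by
            rw [e1, extFun_incl]
          have h2 : csgLabelFun G k T δ₂ ⟨s.1, s.2.1⟩ = f s := by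
            rw [e2, extFun_incl]
          exact h1.trans h2.symm
        have hstep : csgNode G k (T \ {v}) γ₂ = csgNode G k (T \ {v}) δ₂ :=
          SimpleGraph.ConnectedComponent.sound (SimpleGraph.Adj.reachable
            ((sls_adj_iff G k).mpr ⟨hadj₂, hlabγ₂δ₂⟩))
        have hγ₂S : csgNode G k (T \ {v}) γ₂ = csgNode G k (T \ {v}) γ :=
          csgNode_mono G k Set.diff_subset (hγ₂.trans hγ'.symm)
        have hδ₂S : csgNode G k (T \ {v}) δ₂ = X' := by
          rw [← hδ']
          exact csgNode_mono G k Set.diff_subset (hδ₂.trans hδnode.symm)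
        rw [← hδ₂S, ← hstep, hγ₂S]
  refine ⟨hScard, hinj, key, ?_⟩
  intro X Y
  constructor
  · exact fun h => csg_adj_exists_unique G k h
  · rintro ⟨s₀, hs₀, hs₀u⟩
    have hfg : ∀ s, s ≠ s₀ → csgLabel G k (T \ {v}) X s = csgLabel G k (T \ {v}) Y s :=
      fun s hs => by_contra fun hcon => hs (hs₀u s hcon)
    have hfinj : Function.Injective (csgLabel G k (T \ {v}) X) := hinj X
    have hginj : Function.Injective (csgLabel G k (T \ {v}) Y) := hinj Y
    have hcardA : (insert (csgLabel G k (T \ {v}) Y s₀)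
        (Finset.image (csgLabel G k (T \ {v}) X) Finset.univ)).card < k := by
      have h1 := Finset.card_insert_le (csgLabel G k (T \ {v}) Y s₀)
        (Finset.image (csgLabel G k (T \ {v}) X) Finset.univ)
      rw [Finset.card_image_of_injective _ hfinj, Finset.card_univ, cardS] at h1
      omega
    obtain ⟨c1, hc1⟩ := exists_color_notin k _ hcardA
    have hc1f : ∀ s, c1 ≠ csgLabel G k (T \ {v}) X s := fun s h =>
      hc1 (Finset.mem_insert.mpr (Or.inr
        (Finset.mem_image.mpr ⟨s, Finset.mem_univ _, h.symm⟩)))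
    have hc1g : ∀ s, c1 ≠ csgLabel G k (T \ {v}) Y s := by
      intro s h
      by_cases hs : s = s₀
      · subst hs
        exact hc1 (Finset.mem_insert.mpr (Or.inl h))
      · rw [← hfg s hs] at h
        exact hc1f s h
    obtain ⟨x, hx, hxu⟩ := hcc.2.1 (extFun k T v (csgLabel G k (T \ {v}) X) c1)
      (extFun_inj k hfinj hc1f)
    obtain ⟨y, hy, hyu⟩ := hcc.2.1 (extFun k T v (csgLabel G k (T \ {v}) Y) c1)
      (extFun_inj k hginj hc1g)
    have hdiff : ∃! t : ↥T, csgLabel G k T x t ≠ csgLabel G k T y t := by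
      rw [hx, hy]
      refine ⟨⟨s₀.1, s₀.2.1⟩, ?_, ?_⟩
      · show extFun k T v (csgLabel G k (T \ {v}) X) c1 ⟨s₀.1, s₀.2.1⟩
            ≠ extFun k T v (csgLabel G k (T \ {v}) Y) c1 ⟨s₀.1, s₀.2.1⟩
        rw [extFun_incl, extFun_incl]
        exact hs₀
      · intro t ht
        rcases T_cases hv t with h | ⟨s, h⟩
        · exfalso
          apply ht
          rw [h, extFun_v k hv, extFun_v k hv]
        · subst h
          have hne : extFun k T v (csgLabel G k (T \ {v}) X) c1 ⟨s.1, s.2.1⟩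
              ≠ extFun k T v (csgLabel G k (T \ {v}) Y) c1 ⟨s.1, s.2.1⟩ := ht
          rw [extFun_incl, extFun_incl] at hne
          exact congrArg (fun s : ↥(T \ {v}) => (⟨s.1, s.2.1⟩ : ↥T)) (hs₀u s hne)
    have hadjxy : (CSG G k T).Adj x y := (hcc.2.2 x y).mpr hdiff
    obtain ⟨hnexy, γ, δ, hγ, hδ, hadj⟩ := (csg_adj_iff G k).mp hadjxy
    have hXγ : csgNode G k (T \ {v}) γ = X := by
      refine (key _ hfinj).unique ?_ rfl
      funext s
      show γ.1 s.1 = csgLabel G k (T \ {v}) X s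
      have h1 : csgLabelFun G k T γ ⟨s.1, s.2.1⟩
          = extFun k T v (csgLabel G k (T \ {v}) X) c1 ⟨s.1, s.2.1⟩ := by
        rw [← label_mk, hγ, hx]
      rw [extFun_incl] at h1
      exact h1
    have hYδ : csgNode G k (T \ {v}) δ = Y := by
      refine (key _ hginj).unique ?_ rfl
      funext s
      show δ.1 s.1 = csgLabel G k (T \ {v}) Y s
      have h1 : csgLabelFun G k T δ ⟨s.1, s.2.1⟩
          = extFun k T v (csgLabel G k (T \ {v}) Y) c1 ⟨s.1, s.2.1⟩ := by
        rw [← label_mk, hδ, hy]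
      rw [extFun_incl] at h1
      exact h1
    have hXY : X ≠ Y := by
      intro h
      apply hs₀
      rw [h]
    exact (csg_adj_iff G k).mpr ⟨hXY, γ, δ, hXγ, hYδ, hadj⟩

/-! ### Part 2: forest + INP is preserved -/

/-- Merge-adjacency: adjacent nodes of `CSG G k T` whose labels agree off `v`. -/
def MAdj (T : Set V) (v : V) (a b : CSGNode G k T) : Prop :=
  (CSG G k T).Adj a b ∧
    ∀ s : ↥(T \ {v}), csgLabel G k T a ⟨s.1, s.2.1⟩ = csgLabel G k T b ⟨s.1, s.2.1⟩

lemma madj_symm {a b : CSGNode G k T} (h : MAdj G k T v a b) : MAdj G k T v b a :=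
  ⟨h.1.symm, fun s => (h.2 s).symm⟩

lemma madj_v_not_mem [Fintype ↥T] (hv : v ∈ T) (hT : G.IsClique T)
    {x y : CSGNode G k T} (h : MAdj G k T v x y) :
    csgLabel G k T x ⟨v, hv⟩ ∉ Finset.image (csgLabel G k T y) Finset.univ := by
  intro hmem
  obtain ⟨t, -, ht⟩ := Finset.mem_image.mp hmem
  rcases T_cases hv t with h1 | ⟨s, h1⟩
  · subst h1
    have heq : csgLabel G k T y = csgLabel G k T x :=
      ext_label_eq k hv (fun s => (h.2 s).symm) ht
    exact adj_label_ne G k h.1 heq.symm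
  · subst h1
    have h2 : csgLabel G k T x ⟨s.1, s.2.1⟩ = csgLabel G k T x ⟨v, hv⟩ := by
      rw [h.2 s]; exact ht
    have h3 := csgLabel_inj G k hT x h2
    exact s.2.2 (congrArg Subtype.val h3)

lemma merge_unique [Fintype ↥T] (hv : v ∈ T) (hT : G.IsClique T)
    (hcard : k - 1 ≤ T.ncard) (hinp : INP (CSG G k T) (csgLabel G k T))
    {x y z : CSGNode G k T} (h1 : MAdj G k T v x y) (h2 : MAdj G k T v y z) : x = z := by
  by_contra hxz
  have hcardT : k - 1 ≤ Fintype.card ↥T := by rw [card_coe]; exact hcard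
  have hONE : (Finset.univ \ Finset.image (csgLabel G k T y) Finset.univ).card ≤ 1 := by
    rw [Finset.card_sdiff_of_subset (Finset.subset_univ _),
      Finset.card_image_of_injective _ (csgLabel_inj G k hT y)]
    simp only [Finset.card_univ, Fintype.card_fin]
    omega
  have hx := madj_v_not_mem G k hv hT h1
  have hz := madj_v_not_mem G k hv hT (madj_symm G k h2)
  have hveq : csgLabel G k T x ⟨v, hv⟩ = csgLabel G k T z ⟨v, hv⟩ :=
    Finset.card_le_one.mp hONE _ (Finset.mem_sdiff.mpr ⟨Finset.mem_univ _, hx⟩)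
      _ (Finset.mem_sdiff.mpr ⟨Finset.mem_univ _, hz⟩)
  have hlab : csgLabel G k T x = csgLabel G k T z :=
    ext_label_eq k hv (fun s => (h1.2 s).trans (h2.2 s)) hveq
  exact hinp y x z h1.1.symm h2.1 hxz hlab

lemma class_lemma [Fintype ↥T] (hv : v ∈ T) (hT : G.IsClique T)
    (hcard : k - 1 ≤ T.ncard) (hinp : INP (CSG G k T) (csgLabel G k T))
    {γ δ : {α : V → Fin k // IsColoring G k α}}
    (h : csgNode G k (T \ {v}) γ = csgNode G k (T \ {v}) δ) :
    csgNode G k T γ = csgNode G k T δ ∨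
      MAdj G k T v (csgNode G k T γ) (csgNode G k T δ) := by
  have hr := SimpleGraph.ConnectedComponent.exact h
  clear h
  obtain ⟨w⟩ := hr
  induction w with
  | nil => exact Or.inl rfl
  | @cons a b c hadj p ih =>
    by_cases hl : csgLabelFun G k T a = csgLabelFun G k T b
    · have hab : csgNode G k T a = csgNode G k T b :=
        SimpleGraph.ConnectedComponent.sound (SimpleGraph.Adj.reachable ⟨hadj.1, hl⟩)
      rw [hab]
      exact ih
    · have hneT : csgNode G k T a ≠ csgNode G k T b := by
        intro hb
        apply hl
        have := congrArg (csgLabel G k T) hb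
        exact this
      have hM : MAdj G k T v (csgNode G k T a) (csgNode G k T b) :=
        ⟨(csg_adj_iff G k).mpr ⟨hneT, a, b, rfl, rfl, hadj.1⟩,
          fun s => congrFun hadj.2 s⟩
      rcases ih with ih | ih
      · rw [← ih]
        exact Or.inr hM
      · exact Or.inl (merge_unique G k hv hT hcard hinp hM ih)

/-- The projection from nodes of `CSG G k T` to nodes of `CSG G k (T \ {v})`. -/
def projS (T : Set V) (v : V) : CSGNode G k T → CSGNode G k (T \ {v}) :=
  SimpleGraph.ConnectedComponent.lift (fun γ => csgNode G k (T \ {v}) γ) (by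
    intro γ δ p hp
    clear hp
    induction p with
    | nil => rfl
    | cons h _ ih =>
      refine Eq.trans ?_ ih
      apply SimpleGraph.ConnectedComponent.sound
      apply SimpleGraph.Adj.reachable
      apply (sls_adj_iff G k).mpr
      refine ⟨h.1, ?_⟩
      funext s
      exact congrFun h.2 ⟨s.1, s.2.1⟩)

lemma projS_mk (γ : {α : V → Fin k // IsColoring G k α}) :
    projS G k T v (csgNode G k T γ) = csgNode G k (T \ {v}) γ := rfl

lemma same_class_reach [Fintype ↥T] (hv : v ∈ T) (hT : G.IsClique T)
    (hcard : k - 1 ≤ T.ncard) (hinp : INP (CSG G k T) (csgLabel G k T))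
    {c d : CSGNode G k T} (hCD : projS G k T v c ≠ projS G k T v d)
    {a b : CSGNode G k T} (h : projS G k T v a = projS G k T v b) :
    ((CSG G k T) \ fromEdgeSet {s(c, d)}).Reachable a b := by
  induction a using SimpleGraph.ConnectedComponent.ind with
  | _ γ =>
  induction b using SimpleGraph.ConnectedComponent.ind with
  | _ δ =>
  show ((CSG G k T) \ fromEdgeSet {s(c, d)}).Reachable (csgNode G k T γ) (csgNode G k T δ)
  rcases class_lemma G k hv hT hcard hinp h with h1 | h1
  · rw [h1]
  · have hH : (CSG G k T).Adj (csgNode G k T γ) (csgNode G k T δ) := h1.1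
    have hnotE : ¬ (fromEdgeSet {s(c, d)}).Adj (csgNode G k T γ) (csgNode G k T δ) := by
      rw [SimpleGraph.fromEdgeSet_adj]
      rintro ⟨hmem, -⟩
      rw [Set.mem_singleton_iff, Sym2.eq_iff] at hmem
      apply hCD
      rcases hmem with ⟨h2, h3⟩ | ⟨h2, h3⟩
      · rw [← h2, ← h3]
        exact h
      · rw [← h2, ← h3]
        exact h.symm
    exact SimpleGraph.Adj.reachable (by rw [SimpleGraph.sdiff_adj]; exact ⟨hH, hnotE⟩)

lemma lift_reach [Fintype ↥T] (hv : v ∈ T) (hT : G.IsClique T)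
    (hcard : k - 1 ≤ T.ncard) (hinp : INP (CSG G k T) (csgLabel G k T))
    {c d : CSGNode G k T} (hCD : projS G k T v c ≠ projS G k T v d)
    {C₁ C₂ : CSGNode G k (T \ {v})}
    (w : ((CSG G k (T \ {v})) \ fromEdgeSet {s(projS G k T v c, projS G k T v d)}).Walk C₁ C₂) :
    ∀ a₁ a₂ : CSGNode G k T, projS G k T v a₁ = C₁ → projS G k T v a₂ = C₂ →
      ((CSG G k T) \ fromEdgeSet {s(c, d)}).Reachable a₁ a₂ := by
  induction w with
  | nil =>
    intro a₁ a₂ h1 h2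
    exact same_class_reach G k hv hT hcard hinp hCD (h1.trans h2.symm)
  | @cons C₁ C₃ C₂ hadj p ih =>
    intro a₁ a₂ h1 h2
    rw [SimpleGraph.sdiff_adj] at hadj
    obtain ⟨hQ, hnotE⟩ := hadj
    obtain ⟨hne13, γ, δ, hγ, hδ, hcadj⟩ := (csg_adj_iff G k).mp hQ
    have haT : projS G k T v (csgNode G k T γ) = C₁ := by rw [projS_mk]; exact hγ
    have hbT : projS G k T v (csgNode G k T δ) = C₃ := by rw [projS_mk]; exact hδ
    have hneab : csgNode G k T γ ≠ csgNode G k T δ := by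
      intro h
      apply hne13
      rw [← haT, ← hbT, h]
    have hHab : (CSG G k T).Adj (csgNode G k T γ) (csgNode G k T δ) :=
      (csg_adj_iff G k).mpr ⟨hneab, γ, δ, rfl, rfl, hcadj⟩
    have hnotE' : ¬ (fromEdgeSet {s(c, d)}).Adj (csgNode G k T γ) (csgNode G k T δ) := by
      rw [SimpleGraph.fromEdgeSet_adj]
      rintro ⟨hmem, -⟩
      rw [Set.mem_singleton_iff, Sym2.eq_iff] at hmem
      apply hnotE
      rw [SimpleGraph.fromEdgeSet_adj]
      refine ⟨?_, hne13⟩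
      rw [Set.mem_singleton_iff, Sym2.eq_iff]
      rcases hmem with ⟨h3, h4⟩ | ⟨h3, h4⟩
      · left
        rw [← haT, ← hbT, h3, h4]
        exact ⟨rfl, rfl⟩
      · right
        rw [← haT, ← hbT, h3, h4]
        exact ⟨rfl, rfl⟩
    have r1 : ((CSG G k T) \ fromEdgeSet {s(c, d)}).Reachable a₁ (csgNode G k T γ) :=
      same_class_reach G k hv hT hcard hinp hCD (by rw [h1, haT])
    have r2 : ((CSG G k T) \ fromEdgeSet {s(c, d)}).Reachable (csgNode G k T γ)
        (csgNode G k T δ) :=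
      SimpleGraph.Adj.reachable (by rw [SimpleGraph.sdiff_adj]; exact ⟨hHab, hnotE'⟩)
    have r3 := ih (csgNode G k T δ) a₂ hbT h2
    exact (r1.trans r2).trans r3

lemma part2 (hT : G.IsClique T) (hcard : k - 1 ≤ T.ncard) (hv : v ∈ T)
    (hac : IsAcyclic (CSG G k T)) (hinp : INP (CSG G k T) (csgLabel G k T)) :
    IsAcyclic (CSG G k (T \ {v})) ∧
      INP (CSG G k (T \ {v})) (csgLabel G k (T \ {v})) := by
  haveI : Fintype ↥T := Fintype.ofFinite _
  have hSclique : G.IsClique (T \ {v}) := hT.subset Set.diff_subset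
  constructor
  · -- acyclicity
    rw [SimpleGraph.isAcyclic_iff_forall_adj_isBridge]
    intro C D hCD
    obtain ⟨hneCD, γ, δ, hγ, hδ, hadj⟩ := (csg_adj_iff G k).mp hCD
    rw [SimpleGraph.isBridge_iff]
    intro hreach
    have hprojγ : projS G k T v (csgNode G k T γ) = C := by rw [projS_mk]; exact hγ
    have hprojδ : projS G k T v (csgNode G k T δ) = D := by rw [projS_mk]; exact hδ
    have hCDproj : projS G k T v (csgNode G k T γ) ≠ projS G k T v (csgNode G k T δ) := by
      rw [hprojγ, hprojδ]; exact hneCD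
    have hcdne : csgNode G k T γ ≠ csgNode G k T δ := fun h => hCDproj (by rw [h])
    have hHcd : (CSG G k T).Adj (csgNode G k T γ) (csgNode G k T δ) :=
      (csg_adj_iff G k).mpr ⟨hcdne, γ, δ, rfl, rfl, hadj⟩
    have hbridge := (SimpleGraph.isAcyclic_iff_forall_adj_isBridge.mp hac) hHcd
    rw [SimpleGraph.isBridge_iff] at hbridge
    apply hbridge
    obtain ⟨w⟩ := hreach
    have hw : ((CSG G k (T \ {v})) \
        fromEdgeSet {s(projS G k T v (csgNode G k T γ),
          projS G k T v (csgNode G k T δ))}).Walk C D := by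
      rw [hprojγ, hprojδ]
      exact w
    exact lift_reach G k hv hT hcard hinp hCDproj hw (csgNode G k T γ) (csgNode G k T δ)
      hprojγ hprojδ
  · -- INP
    intro U X Y hUX hUY hXY heq
    obtain ⟨hneUX, γ, δ, hγ, hδ, hadj1⟩ := (csg_adj_iff G k).mp hUX
    obtain ⟨hneUY, γ', δ', hγ', hδ', hadj2⟩ := (csg_adj_iff G k).mp hUY
    -- step lemma applications
    have hne1 : csgNode G k (T \ {v}) γ ≠ csgNode G k (T \ {v}) δ := by
      rw [hγ, hδ]; exact hneUX
    have hne2 : csgNode G k (T \ {v}) γ' ≠ csgNode G k (T \ {v}) δ' := by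
      rw [hγ', hδ']; exact hneUY
    obtain ⟨s₁, hd₁, he₁⟩ := step_lemma G k hadj1 hne1
    obtain ⟨s₂, hd₂, he₂⟩ := step_lemma G k hadj2 hne2
    have hp : δ.1 v = γ.1 v := (he₁ v (fun h => s₁.2.2 h.symm)).symm
    have hq : δ'.1 v = γ'.1 v := (he₂ v (fun h => s₂.2.2 h.symm)).symm
    -- label identifications
    have hhU1 : csgLabel G k (T \ {v}) U = csgLabelFun G k (T \ {v}) γ := by
      rw [← hγ]; rfl
    have hhU2 : csgLabel G k (T \ {v}) U = csgLabelFun G k (T \ {v}) γ' := by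
      rw [← hγ']; rfl
    have hhX : csgLabel G k (T \ {v}) X = csgLabelFun G k (T \ {v}) δ := by
      rw [← hδ]; rfl
    have hhY : csgLabel G k (T \ {v}) Y = csgLabelFun G k (T \ {v}) δ' := by
      rw [← hδ']; rfl
    -- γ and γ' agree on T \ {v}
    have hγγ' : ∀ s : ↥(T \ {v}), γ.1 s.1 = γ'.1 s.1 := by
      intro s
      have := (congrFun hhU1 s).symm.trans (congrFun hhU2 s)
      exact this
    have hδδ' : ∀ s : ↥(T \ {v}), δ.1 s.1 = δ'.1 s.1 := by
      intro s
      have h1 := (congrFun hhX s).symm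
      have h2 := congrFun hhY s
      rw [heq] at h1
      exact h1.trans h2
    -- s₁ = s₂
    have hs12 : s₁ = s₂ := by
      by_contra hss
      have hval : s₁.1 ≠ s₂.1 := fun h => hss (Subtype.ext h)
      have h1 : γ'.1 s₁.1 = δ'.1 s₁.1 := he₂ s₁.1 hval
      have h2 : γ.1 s₁.1 = γ'.1 s₁.1 := hγγ' s₁
      have h3 : δ.1 s₁.1 = δ'.1 s₁.1 := hδδ' s₁
      exact hd₁ ((h2.trans h1).trans h3.symm)
    subst hs12
    -- case analysis on whether γ and γ' are in the same T-component
    by_cases hcc' : csgNode G k T γ = csgNode G k T γ'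
    · -- p = q, labels of x and y on T coincide, INP of H gives contradiction
      have hlabγγ' : csgLabelFun G k T γ = csgLabelFun G k T γ' := by
        have := congrArg (csgLabel G k T) hcc'
        exact this
      have hpq : γ.1 v = γ'.1 v := congrFun hlabγγ' ⟨v, hv⟩
      have hlabδδ' : csgLabelFun G k T δ = csgLabelFun G k T δ' := by
        apply ext_label_eq k hv
        · intro s
          exact hδδ' s
        · show δ.1 v = δ'.1 v
          rw [hp, hq, hpq]
      have hxyne : csgNode G k T δ ≠ csgNode G k T δ' := by
        intro h
        apply hXY
        rw [← hδ, ← hδ']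
        exact csgNode_mono G k Set.diff_subset h
      have hneγδ : csgNode G k T γ ≠ csgNode G k T δ := by
        intro h
        apply hneUX
        rw [← hγ, ← hδ]
        exact csgNode_mono G k Set.diff_subset h
      have hneγ'δ' : csgNode G k T γ' ≠ csgNode G k T δ' := by
        intro h
        apply hneUY
        rw [← hγ', ← hδ']
        exact csgNode_mono G k Set.diff_subset h
      have hH1 : (CSG G k T).Adj (csgNode G k T γ) (csgNode G k T δ) :=
        (csg_adj_iff G k).mpr ⟨hneγδ, γ, δ, rfl, rfl, hadj1⟩
      have hH2 : (CSG G k T).Adj (csgNode G k T γ) (csgNode G k T δ') := by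
        rw [hcc']
        exact (csg_adj_iff G k).mpr ⟨hneγ'δ', γ', δ', rfl, rfl, hadj2⟩
      exact hinp _ _ _ hH1 hH2 hxyne hlabδδ'
    · -- merge-adjacent case: counting argument
      have hsame : csgNode G k (T \ {v}) γ = csgNode G k (T \ {v}) γ' := by
        rw [hγ, hγ']
      rcases class_lemma G k hv hT hcard hinp hsame with h1 | hM
      · exact hcc' h1
      have hlabne : csgLabelFun G k T γ ≠ csgLabelFun G k T γ' :=
        adj_label_ne G k hM.1
      have hpq : γ.1 v ≠ γ'.1 v := by
        intro h
        apply hlabne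
        apply ext_label_eq k hv
        · intro s
          exact hγγ' s
        · exact h
      -- the counting argument
      have hLγinj : Function.Injective (csgLabelFun G k T γ) :=
        coloring_inj_clique G k hT γ
      have hLγ'inj : Function.Injective (csgLabelFun G k T γ') :=
        coloring_inj_clique G k hT γ'
      have hLδinj : Function.Injective (csgLabelFun G k T δ) :=
        coloring_inj_clique G k hT δ
      have hLδ'inj : Function.Injective (csgLabelFun G k T δ') :=
        coloring_inj_clique G k hT δ'
      have hcardT : k - 1 ≤ Fintype.card ↥T := by rw [card_coe]; exact hcard
      set A : Finset (Fin k) :=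
        insert (γ'.1 v) (Finset.image (csgLabelFun G k T γ) Finset.univ) with hA
      have hqnot : (γ'.1 v) ∉ Finset.image (csgLabelFun G k T γ) Finset.univ := by
        intro hmem
        obtain ⟨t, -, ht⟩ := Finset.mem_image.mp hmem
        rcases T_cases hv t with h1 | ⟨s, h1⟩
        · subst h1
          exact hpq ht
        · subst h1
          -- γ.1 s.1 = γ'.1 v, but γ.1 s.1 = γ'.1 s.1
          have h2 : γ'.1 s.1 = γ'.1 v := (hγγ' s).symm.trans ht
          have h3 : csgLabelFun G k T γ' ⟨s.1, s.2.1⟩ = csgLabelFun G k T γ' ⟨v, hv⟩ := h2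
          have h4 := hLγ'inj h3
          exact s.2.2 (congrArg Subtype.val h4)
      have hAcard : A.card = Fintype.card ↥T + 1 := by
        rw [hA, Finset.card_insert_of_notMem hqnot,
          Finset.card_image_of_injective _ hLγinj]
        simp only [Finset.card_univ]
      have hAle : A.card ≤ k := by
        have h9 := Finset.card_le_univ A
        simp only [Finset.card_univ, Fintype.card_fin] at h9
        exact h9
      have hAuniv : A = Finset.univ := by
        apply Finset.eq_univ_of_card
        rw [Fintype.card_fin]
        omega
      -- now δ.1 s₁.1 ∈ A, derive a contradiction in all cases
      have hmemA : δ.1 s₁.1 ∈ A := by rw [hAuniv]; exact Finset.mem_univ _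
      rw [hA, Finset.mem_insert] at hmemA
      rcases hmemA with h1 | h1
      · -- δ.1 s₁.1 = γ'.1 v; but δ.1 s₁.1 = δ'.1 s₁.1 and γ'.1 v = δ'.1 v
        have h2 : δ'.1 s₁.1 = δ'.1 v := (hδδ' s₁).symm.trans (h1.trans hq.symm)
        have h3 : csgLabelFun G k T δ' ⟨s₁.1, s₁.2.1⟩ = csgLabelFun G k T δ' ⟨v, hv⟩ := h2
        have h4 := hLδ'inj h3
        exact s₁.2.2 (congrArg Subtype.val h4)
      · obtain ⟨t, -, ht⟩ := Finset.mem_image.mp h1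
        rcases T_cases hv t with h2 | ⟨s, h2⟩
        · subst h2
          -- γ.1 v = δ.1 s₁.1; but δ.1 v = γ.1 v, contradicting injectivity of δ's label
          have h3 : δ.1 v = δ.1 s₁.1 := hp.trans ht
          have h4 : csgLabelFun G k T δ ⟨v, hv⟩ = csgLabelFun G k T δ ⟨s₁.1, s₁.2.1⟩ := h3
          have h5 := hLδinj h4
          exact s₁.2.2 (congrArg Subtype.val h5).symm
        · subst h2
          -- γ.1 s.1 = δ.1 s₁.1
          by_cases hs : s = s₁
          · subst hs
            exact hd₁ ht
          · -- s ≠ s₁ : γ.1 s.1 = δ.1 s.1, so δ.1 s.1 = δ.1 s₁.1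
            have hval : s.1 ≠ s₁.1 := fun h => hs (Subtype.ext h)
            have h3 : γ.1 s.1 = δ.1 s.1 := he₁ s.1 hval
            have h4 : δ.1 s.1 = δ.1 s₁.1 := h3.symm.trans ht
            have h5 : csgLabelFun G k T δ ⟨s.1, s.2.1⟩
                = csgLabelFun G k T δ ⟨s₁.1, s₁.2.1⟩ := h4
            have h6 := hLδinj h5
            exact hval (congrArg (fun x : ↥T => (x : V)) h6)

end Statement11

/-- the forget operation preserves the invariant: if `C^c_k(G,T)` is a
`(k−1,k)`-color-complete graph then `C^c_k(G, T∖{v})` is a `(k−2,k)`-color-complete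
graph, and if `C^c_k(G,T)` is a forest satisfying the INP, then so is
`C^c_k(G, T∖{v})`. -/
theorem statement_11 {V : Type} [Fintype V] [DecidableEq V] (G : SimpleGraph V)
    (k : ℕ) (hk : 1 ≤ k) (hchord : Chordal G)
    (hcol : ∃ α : V → Fin k, IsColoring G k α)
    (T : Set V) (hT : G.IsClique T) (hcard : k - 1 ≤ T.ncard) (v : V) (hv : v ∈ T) :
    ((T.ncard = k - 1 ∧ IsColorComplete k (CSG G k T) (csgLabel G k T)) →
      ((T \ {v}).ncard = k - 2 ∧
        IsColorComplete k (CSG G k (T \ {v})) (csgLabel G k (T \ {v})))) ∧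
    ((IsAcyclic (CSG G k T) ∧ INP (CSG G k T) (csgLabel G k T)) →
      (IsAcyclic (CSG G k (T \ {v})) ∧
        INP (CSG G k (T \ {v})) (csgLabel G k (T \ {v})))) := by
  constructor
  · rintro ⟨hTc, hcc⟩
    exact Statement11.part1 G k hT hv hTc hcc
  · rintro ⟨hac, hinp⟩
    exact Statement11.part2 G k hT hcard hv hac hinp
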